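/- Let Π be a sequence of primes tending to infinity and Γ a Π-graded torsion group. Then every normal subgroup of Γ is closed in the profinite topology of Γ. -/

import Mathlib

open scoped commutatorElement

/-- `D_p(K) = K^p [K,K]`: the subgroup generated by `p`-th powers and commutators of
elements of `K`, as a subgroup of the ambient group. -/
def Dverbal {Γ : Type*} [Group Γ] (p : ℕ) (K : Subgroup Γ) : Subgroup Γ :=
  Subgroup.closure ({x : Γ | ∃ k ∈ K, x = k ^ p} ∪
    {x : Γ | ∃ a ∈ K, ∃ b ∈ K, x = ⁅a, b⁆})

/-- The series `Γ^{Π(0)} = Γ`, `Γ^{Π(n)} = D_{p_n}(Γ^{Π(n-1)})`. -/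
def piSeries {Γ : Type*} [Group Γ] (P : ℕ → ℕ) : ℕ → Subgroup Γ
  | 0 => ⊤
  | n + 1 => Dverbal (P (n + 1)) (piSeries P n)

section Aux

variable {Γ : Type*} [Group Γ]

lemma pow_mem_Dverbal {p : ℕ} {K : Subgroup Γ} {k : Γ} (hk : k ∈ K) :
    k ^ p ∈ Dverbal p K :=
  Subgroup.subset_closure (Or.inl ⟨k, hk, rfl⟩)

lemma Dverbal_le {p : ℕ} {K : Subgroup Γ} : Dverbal p K ≤ K := by
  rw [Dverbal, Subgroup.closure_le]
  rintro x (⟨k, hk, rfl⟩ | ⟨a, ha, b, hb, rfl⟩)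
  · exact K.pow_mem hk p
  · exact K.mul_mem (K.mul_mem (K.mul_mem ha hb) (K.inv_mem ha)) (K.inv_mem hb)

lemma Dverbal_mono {p : ℕ} {K K' : Subgroup Γ} (h : K ≤ K') :
    Dverbal p K ≤ Dverbal p K' := by
  apply Subgroup.closure_mono
  rintro x (⟨k, hk, rfl⟩ | ⟨a, ha, b, hb, rfl⟩)
  · exact Or.inl ⟨k, h hk, rfl⟩
  · exact Or.inr ⟨a, h ha, b, h hb, rfl⟩

lemma Dverbal_map_le (f : Γ →* Γ) (p : ℕ) (K : Subgroup Γ) :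
    (Dverbal p K).map f ≤ Dverbal p (K.map f) := by
  rw [Dverbal, MonoidHom.map_closure]
  apply Subgroup.closure_mono
  rintro x ⟨y, (⟨k, hk, rfl⟩ | ⟨a, ha, b, hb, rfl⟩), rfl⟩
  · exact Or.inl ⟨f k, ⟨k, hk, rfl⟩, by rw [map_pow]⟩
  · exact Or.inr ⟨f a, ⟨a, ha, rfl⟩, f b, ⟨b, hb, rfl⟩, by rw [map_commutatorElement]⟩

lemma Dverbal_normal {p : ℕ} {K : Subgroup Γ} (hK : K.Normal) : (Dverbal p K).Normal := by
  constructor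
  intro x hx g
  have hmap : K.map (MulAut.conj g).toMonoidHom ≤ K := by
    rintro _ ⟨k, hk, rfl⟩
    simpa using hK.conj_mem k hk g
  have : (MulAut.conj g).toMonoidHom x ∈ Dverbal p K :=
    le_trans (Dverbal_map_le _ p K) (Dverbal_mono hmap) ⟨x, hx, rfl⟩
  simpa using this

lemma piSeries_normal (P : ℕ → ℕ) : ∀ n, (piSeries (Γ := Γ) P n).Normal
  | 0 => ⟨fun n _ g => Subgroup.mem_top _⟩
  | n + 1 => Dverbal_normal (piSeries_normal P n)

lemma piSeries_antitone (P : ℕ → ℕ) : Antitone (piSeries (Γ := Γ) P) := by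
  apply antitone_nat_of_succ_le
  intro n
  exact Dverbal_le

/-- If `s ∈ K` has finite order not divisible by the prime `p`, then `s ∈ D_p(K)`. -/
lemma mem_Dverbal_of_not_dvd {p : ℕ} (hp : p.Prime) {K : Subgroup Γ} {s : Γ}
    (hs : s ∈ K) (hfo : IsOfFinOrder s) (h : ¬ p ∣ orderOf s) : s ∈ Dverbal p K := by
  rcases eq_or_ne (orderOf s) 1 with h1 | h1
  · rw [orderOf_eq_one_iff.1 h1]
    exact (Dverbal p K).one_mem
  have hlt : 1 < orderOf s :=
    lt_of_le_of_ne (Nat.one_le_iff_ne_zero.2 (by simpa using hfo.orderOf_pos.ne')) (Ne.symm h1)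
  have hcop : Nat.Coprime p (orderOf s) := (hp.coprime_iff_not_dvd).2 h
  obtain ⟨c, -, hc⟩ := Nat.exists_mul_mod_eq_one_of_coprime hcop hlt
  have hmod : p * c ≡ 1 [MOD orderOf s] := by
    unfold Nat.ModEq
    rw [hc, Nat.mod_eq_of_lt hlt]
  have hpow : s ^ (p * c) = s := by
    have := (pow_eq_pow_iff_modEq (x := s) (n := p * c) (m := 1)).2 hmod
    simpa using this
  have : (s ^ p) ^ c ∈ Dverbal p K := (Dverbal p K).pow_mem (pow_mem_Dverbal hs) c
  rwa [← pow_mul, hpow] at this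

end Aux

/-- If `Π` is a sequence of primes tending to infinity and `Γ` is a
`Π`-graded torsion group, then every normal subgroup `N` of `Γ` is closed in the profinite
topology of `Γ`: it is the intersection of the subgroups `N·M` as `M` ranges over the
finite-index normal subgroups of `Γ`. -/
theorem statement6 {Γ : Type*} [Group Γ] (P : ℕ → ℕ)
    (hP : ∀ i, (P i).Prime)
    (hPinf : Filter.Tendsto P Filter.atTop Filter.atTop)
    (htorsion : ∀ g : Γ, IsOfFinOrder g)
    (hfin : ∀ n, (piSeries (Γ := Γ) P n).FiniteIndex)
    (hres : ⨅ n, piSeries (Γ := Γ) P n = ⊥)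
    (N : Subgroup Γ) (hN : N.Normal) :
    (⨅ (M : Subgroup Γ) (_ : M.Normal) (_ : M.FiniteIndex), N ⊔ M) = N := by
  haveI := hN
  refine le_antisymm ?_ (le_iInf fun M => le_iInf fun _ => le_iInf fun _ => le_sup_left)
  intro x hx
  -- trivial case
  rcases eq_or_ne x 1 with rfl | hx1
  · exact N.one_mem
  set m := orderOf x with hm
  have hmpos : 0 < m := (htorsion x).orderOf_pos
  have hm1 : 1 < m :=
    lt_of_le_of_ne hmpos (fun h => hx1 (orderOf_eq_one_iff.1 (hm ▸ h.symm)))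
  -- choose n₁ so that all later primes exceed m
  obtain ⟨n1, hn1⟩ := Filter.eventually_atTop.1 (hPinf.eventually_ge_atTop (m + 1))
  -- x is in N ⊔ piSeries P n₁
  have hxn : x ∈ N ⊔ piSeries (Γ := Γ) P n1 := by
    have h1 := Subgroup.mem_iInf.1 hx (piSeries (Γ := Γ) P n1)
    have h2 := Subgroup.mem_iInf.1 h1 (piSeries_normal P n1)
    exact Subgroup.mem_iInf.1 h2 (hfin n1)
  -- extract a representative s ∈ piSeries P n₁ of the coset x·N
  rw [← SetLike.mem_coe, Subgroup.normal_mul] at hxn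
  obtain ⟨a, ha, s0, hs0, hx0⟩ := hxn
  set φ := QuotientGroup.mk' N with hφdef
  have hφs0 : φ s0 = φ x := by
    rw [← hx0, map_mul]
    have : φ a = 1 := (QuotientGroup.eq_one_iff a).2 ha
    rw [this, one_mul]
  -- main descent on the order of the representative
  have key : ∀ r (s : Γ), s ∈ piSeries (Γ := Γ) P n1 → orderOf s = r →
      φ s = φ x → x ∈ N := by
    intro r
    induction r using Nat.strong_induction_on with
    | _ r ih =>
      intro s hsG hr hφs
      by_cases hl : ∃ ℓ : ℕ, ℓ.Prime ∧ ℓ ∣ r ∧ ¬ ℓ ∣ m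
      · -- remove a prime not dividing m from the order of s
        obtain ⟨ℓ, hℓp, hℓr, hℓm⟩ := hl
        have hcop : Nat.Coprime ℓ m := (hℓp.coprime_iff_not_dvd).2 hℓm
        obtain ⟨c, -, hc⟩ := Nat.exists_mul_mod_eq_one_of_coprime hcop hm1
        have hmod : ℓ * c ≡ 1 [MOD m] := by
          unfold Nat.ModEq
          rw [hc, Nat.mod_eq_of_lt hm1]
        have hxpow : x ^ (ℓ * c) = x := by
          have := (pow_eq_pow_iff_modEq (x := x) (n := ℓ * c) (m := 1)).2 hmod
          simpa using this
        have hrpos : 0 < r := hr ▸ (htorsion s).orderOf_pos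
        have horder : orderOf (s ^ (ℓ * c)) < r := by
          have hgcd : 1 < Nat.gcd r (ℓ * c) := by
            have hdvd : ℓ ∣ Nat.gcd r (ℓ * c) := Nat.dvd_gcd hℓr ⟨c, rfl⟩
            exact lt_of_lt_of_le hℓp.one_lt (Nat.le_of_dvd
              (Nat.gcd_pos_of_pos_left _ hrpos) hdvd)
          have hne : ℓ * c ≠ 0 := by
            intro h0
            rw [h0] at hc
            simp at hc
          calc orderOf (s ^ (ℓ * c)) = orderOf s / Nat.gcd (orderOf s) (ℓ * c) :=
                orderOf_pow' s hne
            _ = r / Nat.gcd r (ℓ * c) := by rw [hr]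
            _ < r := Nat.div_lt_self hrpos hgcd
        refine ih _ horder (s ^ (ℓ * c)) ((piSeries P n1).pow_mem hsG _) rfl ?_
        rw [map_pow, hφs, ← map_pow, hxpow]
      · -- all primes dividing the order of s divide m: s lies in the whole series
        push_neg at hl
        have hall : ∀ k, s ∈ piSeries (Γ := Γ) P (n1 + k) := by
          intro k
          induction k with
          | zero => exact hsG
          | succ k ihk =>
            show s ∈ Dverbal (P (n1 + k + 1)) (piSeries P (n1 + k))
            refine mem_Dverbal_of_not_dvd (hP _) ihk (htorsion s) ?_
            intro hdvd
            have h1 : P (n1 + k + 1) ∣ m := hl _ (hP _) (hr ▸ hdvd)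
            have h2 : P (n1 + k + 1) ≤ m := Nat.le_of_dvd hmpos h1
            have h3 : m + 1 ≤ P (n1 + k + 1) := hn1 _ (by omega)
            omega
        have hbot : s ∈ (⊥ : Subgroup Γ) := by
          rw [← hres]
          refine Subgroup.mem_iInf.2 fun n => ?_
          rcases le_or_gt n n1 with h | h
          · exact piSeries_antitone P h (hall 0)
          · have := hall (n - n1)
            rwa [Nat.add_sub_cancel' h.le] at this
        have hs1 : s = 1 := Subgroup.mem_bot.1 hbot
        rw [hs1, map_one] at hφs
        exact (QuotientGroup.eq_one_iff x).1 hφs.symm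
  exact key (orderOf s0) s0 hs0 rfl hφs0
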